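/- Let A be an n×n complex random matrix with columns W₁,...,W_n, and for each k let H_k = span{W_j : j ≠ k}. Then for any t ≥ 0 and δ, ρ ∈ (0,1), P( min over (δ,ρ)-incompressible unit vectors x of ‖Ax‖₂ ≤ tρ/√n ) ≤ (2/(δn)) · Σ_{k=1}^n P( dist(W_k, H_k) ≤ t ). -/

import Mathlib

open MeasureTheory

/-- Euclidean norm of a complex vector. -/
noncomputable def enorm' {ι : Type*} [Fintype ι] (v : ι → ℂ) : ℝ :=
  Real.sqrt (∑ i, ‖v i‖ ^ 2)

/-- Euclidean distance from a vector to a set of vectors. -/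
noncomputable def distSet {ι : Type*} [Fintype ι] (v : ι → ℂ)
    (S : Set (ι → ℂ)) : ℝ :=
  sInf {r | ∃ y ∈ S, r = enorm' (v - y)}

/-- Euclidean distance from a vector to a subspace. -/
noncomputable def distE {ι : Type*} [Fintype ι] (v : ι → ℂ)
    (H : Submodule ℂ (ι → ℂ)) : ℝ :=
  sInf {r | ∃ h ∈ H, r = enorm' (v - h)}

/-- The set of vectors in `ℂⁿ` supported on at most `δ n` coordinates. -/
def sparse (n : ℕ) (δ : ℝ) : Set (Fin n → ℂ) :=
  {y | (Nat.card {i // y i ≠ 0} : ℝ) ≤ δ * n}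

lemma enorm_eq_norm {ι : Type*} [Fintype ι] (v : ι → ℂ) :
    enorm' v = ‖(WithLp.equiv 2 (ι → ℂ)).symm v‖ := by
  rw [EuclideanSpace.norm_eq]; rfl

lemma enorm_nonneg' {ι : Type*} [Fintype ι] (v : ι → ℂ) : 0 ≤ enorm' v :=
  Real.sqrt_nonneg _

lemma enorm_smul' {ι : Type*} [Fintype ι] (c : ℂ) (v : ι → ℂ) :
    enorm' (c • v) = ‖c‖ * enorm' v := by
  rw [enorm_eq_norm, enorm_eq_norm, ← norm_smul]; rfl

/-- For a random `n × n` complex matrix `A` with columns `W₁, …, W_n`, and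
`H_k = span{W_j : j ≠ k}`:
`P(min_{x incompressible} ‖A x‖₂ ≤ t ρ/√n) ≤ (2/(δn)) ∑_k P(dist(W_k, H_k) ≤ t)`. -/
theorem invertibility_via_distance {Ω : Type*} [MeasurableSpace Ω]
    (μ : Measure Ω) [IsProbabilityMeasure μ]
    {n : ℕ} (hn : 0 < n) (A : Ω → Matrix (Fin n) (Fin n) ℂ)
    (t δ ρ : ℝ) (ht : 0 ≤ t) (hδ : δ ∈ Set.Ioo (0 : ℝ) 1)
    (hρ : ρ ∈ Set.Ioo (0 : ℝ) 1) :
    μ {ω | ∃ x : Fin n → ℂ, enorm' x = 1 ∧ ρ < distSet x (sparse n δ) ∧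
        enorm' ((A ω).mulVec x) ≤ t * ρ / Real.sqrt n}
      ≤ ENNReal.ofReal (2 / (δ * n)) *
        ∑ k : Fin n, μ {ω | distE (fun r => A ω r k)
          (Submodule.span ℂ {w | ∃ j : Fin n, j ≠ k ∧ w = fun r => A ω r j}) ≤ t} := by
  classical
  obtain ⟨hδ0, hδ1⟩ := hδ
  obtain ⟨hρ0, hρ1⟩ := hρ
  have hn0 : (0:ℝ) < n := Nat.cast_pos.mpr hn
  have hsn : (0:ℝ) < Real.sqrt n := Real.sqrt_pos.mpr hn0
  set B : Fin n → Set Ω := fun k => {ω | distE (fun r => A ω r k)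
      (Submodule.span ℂ {w | ∃ j : Fin n, j ≠ k ∧ w = fun r => A ω r j}) ≤ t} with hB
  set E : Set Ω := {ω | ∃ x : Fin n → ℂ, enorm' x = 1 ∧ ρ < distSet x (sparse n δ) ∧
      enorm' ((A ω).mulVec x) ≤ t * ρ / Real.sqrt n} with hE
  -- Step 1: each ω ∈ E lies in more than δn of the B k.
  have key : ∀ ω ∈ E, δ * n < ((Finset.univ.filter (fun k => ω ∈ B k)).card : ℝ) := by
    rintro ω ⟨x, hx1, hx2, hx3⟩
    set σ : Finset (Fin n) := Finset.univ.filter (fun k => ρ / Real.sqrt n ≤ ‖x k‖) with hσ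
    have hcard : δ * n < (σ.card : ℝ) := by
      by_contra hc
      push_neg at hc
      set y : Fin n → ℂ := fun k => if k ∈ σ then x k else 0 with hy
      have hys : y ∈ sparse n δ := by
        have h1 : (Nat.card {i // y i ≠ 0} : ℝ) ≤ (σ.card : ℝ) := by
          have : Nat.card {i // y i ≠ 0} = (Finset.univ.filter (fun i => y i ≠ 0)).card := by
            rw [Nat.card_eq_fintype_card, Fintype.card_subtype]
          rw [this]
          have hsub : Finset.univ.filter (fun i => y i ≠ 0) ⊆ σ := by
            intro i hi
            simp only [Finset.mem_filter, Finset.mem_univ, true_and] at hi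
            by_contra hiσ
            exact hi (by simp [hy, hiσ])
          exact_mod_cast Nat.cast_le.mpr (Finset.card_le_card hsub)
        exact le_trans h1 hc
      have hd : distSet x (sparse n δ) ≤ enorm' (x - y) := by
        apply csInf_le
        · exact ⟨0, by rintro r ⟨z, _, rfl⟩; exact enorm_nonneg' _⟩
        · exact ⟨y, hys, rfl⟩
      have hxy : enorm' (x - y) ≤ ρ := by
        have hterm : ∀ i, ‖(x - y) i‖ ^ 2 ≤ (ρ / Real.sqrt n) ^ 2 := by
          intro i
          by_cases hiσ : i ∈ σ
          · simp [hy, hiσ, sq_nonneg, div_nonneg hρ0.le hsn.le]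
          · have : (x - y) i = x i := by simp [hy, hiσ]
            rw [this]
            have hlt : ‖x i‖ < ρ / Real.sqrt n := by
              by_contra h
              exact hiσ (Finset.mem_filter.mpr ⟨Finset.mem_univ _, not_lt.mp h⟩)
            exact pow_le_pow_left₀ (norm_nonneg _) hlt.le 2
        have hsum : (∑ i, ‖(x - y) i‖ ^ 2) ≤ n * (ρ / Real.sqrt n) ^ 2 := by
          calc (∑ i, ‖(x - y) i‖ ^ 2) ≤ ∑ _i : Fin n, (ρ / Real.sqrt n) ^ 2 :=
                Finset.sum_le_sum fun i _ => hterm i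
            _ = n * (ρ / Real.sqrt n) ^ 2 := by simp [mul_comm]
        have hval : (n:ℝ) * (ρ / Real.sqrt n) ^ 2 = ρ ^ 2 := by
          rw [div_pow, Real.sq_sqrt hn0.le]
          field_simp
        rw [enorm']
        calc Real.sqrt (∑ i, ‖(x - y) i‖ ^ 2) ≤ Real.sqrt (ρ ^ 2) :=
              Real.sqrt_le_sqrt (by rw [← hval]; exact hsum)
          _ = ρ := Real.sqrt_sq hρ0.le
      linarith
    have hsub : σ ⊆ Finset.univ.filter (fun k => ω ∈ B k) := by
      intro k hk
      simp only [hσ, Finset.mem_filter, Finset.mem_univ, true_and] at hk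
      refine Finset.mem_filter.mpr ⟨Finset.mem_univ _, ?_⟩
      -- show distE (W k) (span ...) ≤ t
      have hxk0 : (0:ℝ) < ‖x k‖ := lt_of_lt_of_le (div_pos hρ0 hsn) hk
      have hxk : x k ≠ 0 := by simpa using norm_pos_iff.mp hxk0
      set W : Fin n → (Fin n → ℂ) := fun j r => A ω r j with hW
      have hAx : (A ω).mulVec x = ∑ j, x j • W j := by
        funext r
        simp only [Matrix.mulVec, dotProduct, Finset.sum_apply, Pi.smul_apply,
          smul_eq_mul, hW]
        exact Finset.sum_congr rfl fun j _ => mul_comm _ _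
      set c : ℂ := (x k)⁻¹ with hc
      set h : Fin n → ℂ := W k - c • (A ω).mulVec x with hh
      have hmem : h ∈ Submodule.span ℂ {w | ∃ j : Fin n, j ≠ k ∧ w = fun r => A ω r j} := by
        have : h = ∑ j ∈ Finset.univ.erase k, (-(c * x j)) • W j := by
          rw [hh, hAx, Finset.smul_sum]
          rw [← Finset.add_sum_erase _ _ (Finset.mem_univ k)]
          have hck : c • (x k • W k) = W k := by
            rw [smul_smul, hc, inv_mul_cancel₀ hxk, one_smul]
          rw [hck]
          rw [sub_add_eq_sub_sub, sub_self, zero_sub, ← Finset.sum_neg_distrib]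
          refine Finset.sum_congr rfl fun j _ => ?_
          rw [smul_smul, neg_smul]
        rw [this]
        refine Submodule.sum_mem _ fun j hj => ?_
        refine Submodule.smul_mem _ _ (Submodule.subset_span ?_)
        exact ⟨j, (Finset.mem_erase.mp hj).1, rfl⟩
      have hdle : distE (W k) (Submodule.span ℂ
          {w | ∃ j : Fin n, j ≠ k ∧ w = fun r => A ω r j}) ≤ enorm' (W k - h) := by
        apply csInf_le
        · exact ⟨0, by rintro r ⟨z, _, rfl⟩; exact enorm_nonneg' _⟩
        · exact ⟨h, hmem, rfl⟩
      have hWh : W k - h = c • (A ω).mulVec x := by rw [hh, sub_sub_cancel]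
      have hnorm : enorm' (W k - h) ≤ t := by
        rw [hWh, enorm_smul']
        have hcn : ‖c‖ ≤ Real.sqrt n / ρ := by
          rw [hc, norm_inv]
          rw [inv_le_comm₀ hxk0 (div_pos hsn hρ0), inv_div]
          exact hk
        calc ‖c‖ * enorm' ((A ω).mulVec x) ≤ (Real.sqrt n / ρ) * (t * ρ / Real.sqrt n) := by
              apply mul_le_mul hcn hx3 (enorm_nonneg' _) (div_nonneg hsn.le hρ0.le)
          _ = t := by field_simp
      exact le_trans hdle hnorm
    calc δ * n < (σ.card : ℝ) := hcard
      _ ≤ _ := Nat.cast_le.mpr (Finset.card_le_card hsub)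
  -- Step 2: counting argument.
  set C : Fin n → Set Ω := fun k => toMeasurable μ (B k) with hC
  set f : Ω → ENNReal := fun ω => ∑ k, (C k).indicator 1 ω with hf
  have hfm : Measurable f := by
    apply Finset.measurable_sum
    intro k _
    exact measurable_one.indicator (measurableSet_toMeasurable μ (B k))
  have hEf : E ⊆ {ω | ENNReal.ofReal (δ * n) ≤ f ω} := by
    intro ω hω
    have h1 : ((Finset.univ.filter (fun k => ω ∈ B k)).card : ENNReal) ≤ f ω := by
      rw [hf]
      calc ((Finset.univ.filter (fun k => ω ∈ B k)).card : ENNReal)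
          = ∑ k, (B k).indicator 1 ω := by
            rw [Finset.sum_indicator_eq_sum_filter]
            simp
        _ ≤ ∑ k, (C k).indicator 1 ω := by
            refine Finset.sum_le_sum fun k _ => ?_
            exact Set.indicator_le_indicator_of_subset (subset_toMeasurable μ (B k))
              (fun _ => zero_le) ω
    refine le_trans ?_ h1
    rw [← ENNReal.ofReal_natCast]
    exact ENNReal.ofReal_le_ofReal (key ω hω).le
  have hmarkov : ENNReal.ofReal (δ * n) * μ E ≤ ∑ k, μ (B k) := by
    calc ENNReal.ofReal (δ * n) * μ E
        ≤ ENNReal.ofReal (δ * n) * μ {ω | ENNReal.ofReal (δ * n) ≤ f ω} :=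
          mul_le_mul_right (measure_mono hEf) _
      _ ≤ ∫⁻ ω, f ω ∂μ := mul_meas_ge_le_lintegral₀ hfm.aemeasurable _
      _ = ∑ k, μ (C k) := by
          rw [hf]
          rw [lintegral_finset_sum _ fun k _ =>
            measurable_one.indicator (measurableSet_toMeasurable μ (B k))]
          exact Finset.sum_congr rfl fun k _ =>
            lintegral_indicator_one (measurableSet_toMeasurable μ (B k))
      _ = ∑ k, μ (B k) := Finset.sum_congr rfl fun k _ => measure_toMeasurable (B k)
  have hδn : (0:ℝ) < δ * n := mul_pos hδ0 hn0
  have hε0 : ENNReal.ofReal (δ * n) ≠ 0 := by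
    simp [ENNReal.ofReal_eq_zero, not_le, hδn]
  have hεt : ENNReal.ofReal (δ * n) ≠ ⊤ := ENNReal.ofReal_ne_top
  have h2 : μ E ≤ (∑ k, μ (B k)) / ENNReal.ofReal (δ * n) := by
    rw [ENNReal.le_div_iff_mul_le (Or.inl hε0) (Or.inl hεt), mul_comm]
    exact hmarkov
  refine le_trans h2 ?_
  rw [ENNReal.div_eq_inv_mul, ← ENNReal.ofReal_inv_of_pos hδn]
  apply mul_le_mul_left
  apply ENNReal.ofReal_le_ofReal
  rw [div_eq_mul_inv]
  nlinarith [inv_pos.mpr hδn]
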